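/- Combining uniform boundedness of Fourier coefficients of (P_Γ^c − 1)φ_n with the H^{−1} summation bound: for all n ≠ 0 and 0 < h ≤ π, ‖(P_Γ^c − 1)φ_n‖_{H^{−1}(∂Ω)} ≤ C h, with C independent of n. -/

import Mathlib

open Real Complex intervalIntegral Set

-- Step A: bound on the mean integral
lemma stepA (n : ℤ) (hn : n ≠ 0) (h : ℝ) (h0 : 0 < h) (hπ : h ≤ π) :
    ‖(∫ τ in (h / 2)..(2 * π - h / 2),
      (1 / Real.sqrt (2 * π) : ℂ) * Complex.exp ((n : ℂ) * (τ : ℂ) * Complex.I))‖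
    ≤ h / Real.sqrt (2 * π) := by
  have hs : (0:ℝ) < Real.sqrt (2 * π) := Real.sqrt_pos.2 (by positivity)
  have hnI : ((n:ℂ) * Complex.I) ≠ 0 := by
    simp [Complex.I_ne_zero, hn]
  have harg : ∀ τ : ℝ, (n:ℂ) * (τ:ℂ) * Complex.I = ((n:ℂ) * Complex.I) * (τ:ℂ) := by
    intro τ; ring
  have hint : (∫ τ in (h / 2)..(2 * π - h / 2),
      (1 / Real.sqrt (2 * π) : ℂ) * Complex.exp ((n : ℂ) * (τ : ℂ) * Complex.I))
      = (1 / Real.sqrt (2 * π) : ℂ) *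
        ((Complex.exp (((n:ℂ)*Complex.I) * ((2*π - h/2 : ℝ):ℂ)) -
          Complex.exp (((n:ℂ)*Complex.I) * ((h/2 : ℝ):ℂ))) / ((n:ℂ)*Complex.I)) := by
    rw [intervalIntegral.integral_const_mul]
    congr 1
    rw [← integral_exp_mul_complex hnI]
    simp only [harg]
  -- simplify the first exponential using periodicity
  have hexp1 : Complex.exp (((n:ℂ)*Complex.I) * ((2*π - h/2 : ℝ):ℂ))
      = Complex.exp (-(((n*h/2 : ℝ):ℂ) * Complex.I)) := by
    rw [show ((n:ℂ)*Complex.I) * ((2*π - h/2 : ℝ):ℂ)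
        = (n:ℂ) * (2*π*Complex.I) + (-(((n*h/2 : ℝ):ℂ) * Complex.I)) by push_cast; ring,
      Complex.exp_add, Complex.exp_int_mul_two_pi_mul_I, one_mul]
  have hexp2 : Complex.exp (((n:ℂ)*Complex.I) * ((h/2 : ℝ):ℂ))
      = Complex.exp (((n*h/2 : ℝ):ℂ) * Complex.I) := by
    congr 1; push_cast; ring
  have hdiff : Complex.exp (-(((n*h/2 : ℝ):ℂ) * Complex.I)) -
      Complex.exp (((n*h/2 : ℝ):ℂ) * Complex.I)
      = Complex.sin ((n*h/2 : ℝ):ℂ) * 2 * (-Complex.I) := by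
    rw [Complex.sin]
    field_simp
    linear_combination (Complex.exp (-(((n*h/2 : ℝ):ℂ) * Complex.I)) -
      Complex.exp (((n*h/2 : ℝ):ℂ) * Complex.I)) * Complex.I_mul_I
  rw [hint, hexp1, hexp2, hdiff, norm_mul]
  have h1s : ‖(1 / (Real.sqrt (2*π) : ℂ))‖ = 1 / Real.sqrt (2*π) := by
    rw [norm_div, norm_one, Complex.norm_real, Real.norm_eq_abs, abs_of_pos hs]
  have h2 : ‖(Complex.sin (((n:ℝ)*h/2 : ℝ):ℂ) * 2 * (-Complex.I) / ((n:ℂ)*Complex.I))‖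
      = |Real.sin ((n:ℝ)*h/2)| * 2 / |(n:ℝ)| := by
    rw [norm_div, norm_mul, norm_mul, ← Complex.ofReal_sin, Complex.norm_real, Real.norm_eq_abs]
    simp [Complex.norm_I, Complex.norm_intCast, Int.cast_abs]
  rw [h1s, h2]
  have hn1 : (1:ℝ) ≤ |(n:ℝ)| := by
    rw [← Int.cast_abs]; exact_mod_cast Int.one_le_abs hn
  have hnpos : (0:ℝ) < |(n:ℝ)| := lt_of_lt_of_le one_pos hn1
  have hsin : |Real.sin ((n:ℝ)*h/2)| ≤ |(n:ℝ)| * h / 2 := by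
    calc |Real.sin ((n:ℝ)*h/2)| ≤ |(n:ℝ)*h/2| := Real.abs_sin_le_abs
    _ = |(n:ℝ)| * h / 2 := by rw [abs_div, abs_mul, abs_of_pos h0]; simp
  calc (1 / Real.sqrt (2*π)) * (|Real.sin ((n:ℝ)*h/2)| * 2 / |(n:ℝ)|)
      ≤ (1 / Real.sqrt (2*π)) * ((|(n:ℝ)| * h / 2) * 2 / |(n:ℝ)|) := by gcongr
    _ = h / Real.sqrt (2*π) := by field_simp

-- Step C/D: uniform bound on each Fourier coefficient
lemma coeff_bound (n : ℤ) (hn : n ≠ 0) (h : ℝ) (h0 : 0 < h) (hπ : h ≤ π) (k : ℤ) :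
    ‖((1 / (2 * π) : ℂ) *
      ∫ θ in (0:ℝ)..(2 * π),
        (if θ ∈ Icc (h / 2) (2 * π - h / 2) then
            -(((1 / (2 * π - h) : ℂ)) *
              ∫ τ in (h / 2)..(2 * π - h / 2),
                (1 / Real.sqrt (2 * π) : ℂ) * Complex.exp ((n : ℂ) * (τ : ℂ) * Complex.I))
          else
            -((1 / Real.sqrt (2 * π) : ℂ) * Complex.exp ((n : ℂ) * (θ : ℂ) * Complex.I)))
        * Complex.exp (-(k : ℂ) * (θ : ℂ) * Complex.I))‖
    ≤ (1 / (π * Real.sqrt (2 * π))) * h := by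
  have hs : (0:ℝ) < Real.sqrt (2 * π) := Real.sqrt_pos.2 (by positivity)
  have hπ0 : (0:ℝ) < π := Real.pi_pos
  have h2πh : (0:ℝ) < 2 * π - h := by nlinarith
  have hππ : π ≤ 2 * π - h := by nlinarith
  set J : ℂ := ∫ τ in (h / 2)..(2 * π - h / 2),
      (1 / Real.sqrt (2 * π) : ℂ) * Complex.exp ((n : ℂ) * (τ : ℂ) * Complex.I) with hJ
  have hJle : ‖J‖ ≤ h / Real.sqrt (2 * π) := stepA n hn h h0 hπ
  set c : ℂ := (1 / (2 * π - h) : ℂ) * J with hc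
  have hcle : ‖c‖ ≤ (h / Real.sqrt (2 * π)) / (2 * π - h) := by
    rw [hc, norm_mul, norm_div, norm_one,
      show (2 * (π:ℂ) - (h:ℂ)) = ((2*π - h : ℝ):ℂ) by push_cast; ring,
      Complex.norm_real, Real.norm_eq_abs, abs_of_pos h2πh, one_div_mul_eq_div]
    gcongr
  have hcle' : ‖c‖ ≤ 1 / Real.sqrt (2 * π) := by
    refine hcle.trans ?_
    rw [div_div]
    rw [div_le_div_iff₀ (by positivity) (by positivity)]
    nlinarith [Real.sq_sqrt (by positivity : (0:ℝ) ≤ 2*π), hs]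
  set F : ℝ → ℂ := fun θ =>
    (if θ ∈ Icc (h / 2) (2 * π - h / 2) then -c
      else -((1 / Real.sqrt (2 * π) : ℂ) * Complex.exp ((n : ℂ) * (θ : ℂ) * Complex.I)))
      * Complex.exp (-(k : ℂ) * (θ : ℂ) * Complex.I) with hF
  have hexpabs : ∀ (m : ℤ) (θ : ℝ), ‖Complex.exp ((m:ℂ) * (θ:ℂ) * Complex.I)‖ = 1 := by
    intro m θ
    rw [show (m:ℂ) * (θ:ℂ) * Complex.I = ((((m:ℝ) * θ : ℝ)):ℂ) * Complex.I by push_cast; ring,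
      Complex.norm_exp_ofReal_mul_I]
  have hexpabs' : ∀ θ : ℝ, ‖Complex.exp (-(k:ℂ) * (θ:ℂ) * Complex.I)‖ = 1 := by
    intro θ
    rw [show -(k:ℂ) * (θ:ℂ) * Complex.I = ((-k:ℤ):ℂ) * (θ:ℂ) * Complex.I by push_cast; ring]
    exact hexpabs (-k) θ
  have hFnorm : ∀ θ : ℝ, ‖F θ‖ ≤ 1 / Real.sqrt (2 * π) := by
    intro θ
    rw [hF]
    simp only [norm_mul]
    rw [hexpabs', mul_one]
    by_cases hmem : θ ∈ Icc (h / 2) (2 * π - h / 2)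
    · rw [if_pos hmem, norm_neg]; exact hcle'
    · rw [if_neg hmem, norm_neg, norm_mul, hexpabs, mul_one, norm_div, norm_one,
        Complex.norm_real, Real.norm_eq_abs, abs_of_pos hs]
  have hcont1 : Continuous fun θ : ℝ => Complex.exp ((n:ℂ) * (θ:ℂ) * Complex.I) := by fun_prop
  have hcont2 : Continuous fun θ : ℝ => Complex.exp (-(k:ℂ) * (θ:ℂ) * Complex.I) := by fun_prop
  have hFmeas : Measurable F := by
    rw [hF]
    exact (Measurable.ite measurableSet_Icc measurable_const
      ((hcont1.measurable.const_mul _).neg)).mul hcont2.measurable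
  have hFint : ∀ a b : ℝ, IntervalIntegrable F MeasureTheory.volume a b := by
    intro a b
    refine (_root_.intervalIntegrable_const (c := (1 / Real.sqrt (2 * π) : ℝ))).mono_fun
      hFmeas.aestronglyMeasurable (Filter.Eventually.of_forall fun x => ?_)
    simpa only [Real.norm_eq_abs,
      _root_.abs_of_pos (show (0:ℝ) < 1/Real.sqrt (2*π) by positivity)] using hFnorm x
  have hsplit : (∫ θ in (0:ℝ)..(2 * π), F θ)
      = (∫ θ in (0:ℝ)..(h/2), F θ) + (∫ θ in (h/2)..(2*π - h/2), F θ)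
        + (∫ θ in (2*π - h/2)..(2*π), F θ) := by
    rw [integral_add_adjacent_intervals (hFint 0 (h/2)) (hFint (h/2) (2*π - h/2)),
      integral_add_adjacent_intervals (hFint 0 (2*π - h/2)) (hFint (2*π - h/2) (2*π))]
  have B1 : ‖∫ θ in (0:ℝ)..(h/2), F θ‖ ≤ (1 / Real.sqrt (2*π)) * (h/2) := by
    have := intervalIntegral.norm_integral_le_of_norm_le_const
      (C := 1 / Real.sqrt (2*π)) (f := F) (a := 0) (b := h/2)
      (fun x _ => hFnorm x)
    calc ‖∫ θ in (0:ℝ)..(h/2), F θ‖ ≤ (1/Real.sqrt (2*π)) * |h/2 - 0| := this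
      _ = (1 / Real.sqrt (2*π)) * (h/2) := by
          rw [show (h/2 - 0 : ℝ) = h/2 by ring, _root_.abs_of_nonneg (by positivity : (0:ℝ) ≤ h/2)]
  have B3 : ‖∫ θ in (2*π - h/2)..(2*π), F θ‖ ≤ (1 / Real.sqrt (2*π)) * (h/2) := by
    have := intervalIntegral.norm_integral_le_of_norm_le_const
      (C := 1 / Real.sqrt (2*π)) (f := F) (a := 2*π - h/2) (b := 2*π)
      (fun x _ => hFnorm x)
    calc ‖∫ θ in (2*π - h/2)..(2*π), F θ‖ ≤ (1/Real.sqrt (2*π)) * |2*π - (2*π - h/2)| := this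
      _ = (1 / Real.sqrt (2*π)) * (h/2) := by rw [show 2*π - (2*π - h/2) = h/2 by ring,
            _root_.abs_of_nonneg (by positivity : (0:ℝ) ≤ h/2)]
  have B2 : ‖∫ θ in (h/2)..(2*π - h/2), F θ‖ ≤ h / Real.sqrt (2*π) := by
    have hle : h/2 ≤ 2*π - h/2 := by nlinarith
    have hb : ∀ x ∈ Set.uIoc (h/2) (2*π - h/2), ‖F x‖ ≤ (h / Real.sqrt (2*π)) / (2*π - h) := by
      intro x hx
      rw [Set.uIoc_of_le hle] at hx
      have hxm : x ∈ Icc (h / 2) (2 * π - h / 2) := Ioc_subset_Icc_self hx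
      rw [hF]
      simp only [norm_mul, if_pos hxm]
      rw [hexpabs', mul_one, norm_neg]
      exact hcle
    have := intervalIntegral.norm_integral_le_of_norm_le_const hb
    calc ‖∫ θ in (h/2)..(2*π - h/2), F θ‖
        ≤ (h / Real.sqrt (2*π)) / (2*π - h) * |2*π - h/2 - h/2| := this
      _ = h / Real.sqrt (2*π) := by
          rw [show (2*π - h/2 - h/2 : ℝ) = 2*π - h by ring, _root_.abs_of_pos h2πh]
          field_simp
  calc ‖((1 / (2 * π) : ℂ) * ∫ θ in (0:ℝ)..(2 * π), F θ)‖
      = (1 / (2*π)) * ‖∫ θ in (0:ℝ)..(2 * π), F θ‖ := by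
        rw [norm_mul,
          show ((1 / (2 * π) : ℂ)) = ((1/(2*π) : ℝ):ℂ) by push_cast; ring,
          Complex.norm_real, Real.norm_eq_abs, abs_of_pos (by positivity)]
    _ ≤ (1 / (2*π)) * ((1 / Real.sqrt (2*π)) * (h/2) + h / Real.sqrt (2*π)
          + (1 / Real.sqrt (2*π)) * (h/2)) := by
        rw [hsplit]
        gcongr
        calc ‖((∫ θ in (0:ℝ)..(h/2), F θ) + ∫ θ in (h/2)..(2*π - h/2), F θ)
              + ∫ θ in (2*π - h/2)..(2*π), F θ‖
            ≤ ‖(∫ θ in (0:ℝ)..(h/2), F θ) + ∫ θ in (h/2)..(2*π - h/2), F θ‖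
              + ‖∫ θ in (2*π - h/2)..(2*π), F θ‖ := norm_add_le _ _
          _ ≤ (‖∫ θ in (0:ℝ)..(h/2), F θ‖ + ‖∫ θ in (h/2)..(2*π - h/2), F θ‖)
              + ‖∫ θ in (2*π - h/2)..(2*π), F θ‖ := by gcongr; exact norm_add_le _ _
          _ ≤ ((1 / Real.sqrt (2*π)) * (h/2) + h / Real.sqrt (2*π))
              + (1 / Real.sqrt (2*π)) * (h/2) := by gcongr
    _ = (1 / (π * Real.sqrt (2 * π))) * h := by field_simp; ring

lemma sumS : Summable (fun k : ℤ => (1 + (k:ℝ)^2)⁻¹) := by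
  have h1 : Summable (fun n : ℕ => 1/((n:ℝ))^2) :=
    summable_one_div_nat_pow.mpr one_lt_two
  have h2 : Summable (fun n : ℕ => 1/((n:ℝ)+1)^2) := by
    have := (summable_nat_add_iff 1).mpr h1
    simpa [Nat.cast_add] using this
  have hnat : Summable (fun n : ℕ => (1 + (n:ℝ)^2)⁻¹) := by
    apply (h2.mul_left 4).of_nonneg_of_le (fun n => by positivity)
    intro n
    have hpos1 : (0:ℝ) < 1+(n:ℝ)^2 := by positivity
    have hpos2 : (0:ℝ) < ((n:ℝ)+1)^2 := by positivity
    calc (1+(n:ℝ)^2)⁻¹ ≤ 4/((n:ℝ)+1)^2 := by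
          rw [inv_eq_one_div, div_le_div_iff₀ hpos1 hpos2]; nlinarith [sq_nonneg ((n:ℝ)-1)]
      _ = 4 * (1/((n:ℝ)+1)^2) := by ring
  exact hnat.of_nat_of_neg (hnat.congr fun n =>
    show (1+(n:ℝ)^2)⁻¹ = (1+(((-n : ℤ)):ℝ)^2)⁻¹ by push_cast; ring_nf)

/-- `H^{−1}`-estimate for the cut-off map: there is `C > 0` independent of `n`
such that for all `n ≠ 0` and `0 < h ≤ π`,
`‖(P_Γ^c − 1)φ_n‖_{H^{−1}(∂Ω)} ≤ C h`, where
`‖ψ‖²_{H^{−1}} = Σ_k (1+k²)^{−1}|ψ̂(k)|²`. -/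
theorem stmt_8 :
    ∃ C : ℝ, 0 < C ∧ ∀ (n : ℤ), n ≠ 0 → ∀ h : ℝ, 0 < h → h ≤ π →
      Real.sqrt (∑' k : ℤ, (1 + (k : ℝ) ^ 2)⁻¹ *
        (‖((1 / (2 * π) : ℂ) *
          ∫ θ in (0:ℝ)..(2 * π),
            (if θ ∈ Icc (h / 2) (2 * π - h / 2) then
                -(((1 / (2 * π - h) : ℂ)) *
                  ∫ τ in (h / 2)..(2 * π - h / 2),
                    (1 / Real.sqrt (2 * π) : ℂ) * Complex.exp ((n : ℂ) * (τ : ℂ) * Complex.I))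
              else
                -((1 / Real.sqrt (2 * π) : ℂ) * Complex.exp ((n : ℂ) * (θ : ℂ) * Complex.I)))
            * Complex.exp (-(k : ℂ) * (θ : ℂ) * Complex.I))‖) ^ 2)
      ≤ C * h := by
  have hs : (0:ℝ) < Real.sqrt (2*π) := Real.sqrt_pos.2 (by positivity)
  have hπ0 : (0:ℝ) < π := Real.pi_pos
  set S : ℝ := ∑' k : ℤ, (1 + (k:ℝ)^2)⁻¹ with hS
  have hSpos : 0 < S := sumS.tsum_pos (fun k => by positivity) 0 (by norm_num)
  refine ⟨(1/(π*Real.sqrt (2*π))) * Real.sqrt S, by positivity, ?_⟩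
  intro n hn h h0 hπ
  set B : ℝ := (1/(π*Real.sqrt (2*π))) * h with hB
  have hB0 : (0:ℝ) ≤ B := by positivity
  set G : ℤ → ℝ := fun k => (1 + (k : ℝ) ^ 2)⁻¹ *
        (‖((1 / (2 * π) : ℂ) *
          ∫ θ in (0:ℝ)..(2 * π),
            (if θ ∈ Icc (h / 2) (2 * π - h / 2) then
                -(((1 / (2 * π - h) : ℂ)) *
                  ∫ τ in (h / 2)..(2 * π - h / 2),
                    (1 / Real.sqrt (2 * π) : ℂ) * Complex.exp ((n : ℂ) * (τ : ℂ) * Complex.I))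
              else
                -((1 / Real.sqrt (2 * π) : ℂ) * Complex.exp ((n : ℂ) * (θ : ℂ) * Complex.I)))
            * Complex.exp (-(k : ℂ) * (θ : ℂ) * Complex.I))‖) ^ 2 with hG
  have hterm : ∀ k : ℤ, G k ≤ (1 + (k:ℝ)^2)⁻¹ * B^2 := by
    intro k
    rw [hG]
    have h1 : (0:ℝ) ≤ (1 + (k:ℝ)^2)⁻¹ := by positivity
    refine mul_le_mul_of_nonneg_left ?_ h1
    exact pow_le_pow_left₀ (norm_nonneg _) (coeff_bound n hn h h0 hπ k) 2
  have hsum2 : Summable (fun k : ℤ => (1 + (k:ℝ)^2)⁻¹ * B^2) := sumS.mul_right _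
  have hsum1 : Summable G :=
    hsum2.of_nonneg_of_le (fun k => by rw [hG]; positivity) hterm
  have htsum : (∑' k : ℤ, G k) ≤ S * B^2 := by
    calc (∑' k : ℤ, G k) ≤ ∑' k : ℤ, (1 + (k:ℝ)^2)⁻¹ * B^2 := Summable.tsum_le_tsum hterm hsum1 hsum2
      _ = S * B^2 := by rw [tsum_mul_right]
  calc Real.sqrt (∑' k : ℤ, G k) ≤ Real.sqrt (S * B^2) := Real.sqrt_le_sqrt htsum
    _ = Real.sqrt S * B := by rw [Real.sqrt_mul (le_of_lt hSpos), Real.sqrt_sq hB0]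
    _ = (1/(π*Real.sqrt (2*π)) * Real.sqrt S) * h := by rw [hB]; ring
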